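/- Let Σ be a finite alphabet with |Σ| = k and let L be a commutative language over Σ that is recognized by a DFA with n states. Then both the upward interior of L and the downward interior of L are recognized by DFAs with at most n^k states. -/

import Mathlib

open List

def IsCommutativeLang {α : Type} (L : Language α) : Prop :=
  ∀ u v : List α, u ~ v → (u ∈ L ↔ v ∈ L)

def UpClosure {α : Type} (L : Language α) : Language α :=
  {v | ∃ u ∈ L, u <+ v}

def DownClosure {α : Type} (L : Language α) : Language α :=
  {u | ∃ v ∈ L, u <+ v}

def UpInterior {α : Type} (L : Language α) : Language α :=
  {w | ∃ U : Language α, (∀ x ∈ U, x ∈ L) ∧ UpClosure U = U ∧ w ∈ U}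

def DownInterior {α : Type} (L : Language α) : Language α :=
  {w | ∃ U : Language α, (∀ x ∈ U, x ∈ L) ∧ DownClosure U = U ∧ w ∈ U}

def RecognizedBy {α : Type} (L : Language α) (n : ℕ) : Prop :=
  ∃ (σ : Type) (_ : Fintype σ) (M : DFA α σ), Fintype.card σ = n ∧ M.accepts = L

noncomputable def sc {α : Type} (L : Language α) : ℕ :=
  sInf {n | RecognizedBy L n}

def Nerode {α : Type} (L : Language α) (u v : List α) : Prop :=
  ∀ x : List α, u ++ x ∈ L ↔ v ++ x ∈ L

inductive IsShuffle {α : Type} : List α → List α → List α → Prop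
  | nil : IsShuffle [] [] []
  | left (x : α) {u v w : List α} : IsShuffle u v w → IsShuffle (x :: u) v (x :: w)
  | right (y : α) {u v w : List α} : IsShuffle u v w → IsShuffle u (y :: v) (y :: w)

def Shuffle {α : Type} (U V : Language α) : Language α :=
  {w | ∃ u ∈ U, ∃ v ∈ V, IsShuffle u v w}

def IsPermDFA {α σ : Type} (M : DFA α σ) : Prop :=
  ∀ a : α, Function.Bijective fun q => M.step q a

def IsGroupLang {α : Type} (L : Language α) : Prop :=
  ∃ (σ : Type) (_ : Fintype σ) (M : DFA α σ), IsPermDFA M ∧ M.accepts = L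

def wpow {α : Type} (w : List α) (n : ℕ) : List α :=
  (List.replicate n w).flatten

def IsAperiodicDFA {α σ : Type} (M : DFA α σ) : Prop :=
  ∀ (q : σ) (w : List α) (n : ℕ), 1 ≤ n → M.evalFrom q (wpow w n) = q → M.evalFrom q w = q

def IsAperiodicLang {α : Type} (L : Language α) : Prop :=
  ∃ (σ : Type) (_ : Fintype σ) (M : DFA α σ), IsAperiodicDFA M ∧ M.accepts = L

def ShuffleList {α : Type} : List (Language α) → Language α
  | [] => {([] : List α)}
  | L :: Ls => Shuffle L (ShuffleList Ls)

def UnaryGroupLang {α : Type} (a : α) (U : Language α) : Prop :=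
  (∀ w ∈ U, ∀ x ∈ w, x = a) ∧
  ∃ (σ : Type) (_ : Fintype σ) (M : DFA Unit σ), IsPermDFA M ∧
    ∀ n : ℕ, (List.replicate n a ∈ U ↔ List.replicate n () ∈ M.accepts)

def UnaryAperiodicLang {α : Type} (a : α) (U : Language α) : Prop :=
  (∀ w ∈ U, ∀ x ∈ w, x = a) ∧
  ∃ (σ : Type) (_ : Fintype σ) (M : DFA Unit σ), IsAperiodicDFA M ∧
    ∀ n : ℕ, (List.replicate n a ∈ U ↔ List.replicate n () ∈ M.accepts)

namespace IntAux

variable {α : Type}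

lemma upInterior_char (L : Language α) :
    UpInterior L = {w | ∀ v, w <+ v → v ∈ L} := by
  ext w
  simp only [UpInterior, Set.mem_setOf_eq]
  constructor
  · rintro ⟨U, hUL, hUc, hwU⟩ v hv
    have hvU : v ∈ UpClosure U := ⟨w, hwU, hv⟩
    exact hUL v (hUc ▸ hvU)
  · intro h
    refine ⟨{u | ∀ v, u <+ v → v ∈ L}, fun x hx => hx x (List.Sublist.refl x), ?_, h⟩
    ext u
    simp only [UpClosure, Set.mem_setOf_eq]
    constructor
    · rintro ⟨x, hx, hxu⟩ v huv
      exact hx v (hxu.trans huv)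
    · intro hu
      exact ⟨u, hu, List.Sublist.refl u⟩

lemma downInterior_char (L : Language α) :
    DownInterior L = {w | ∀ v, v <+ w → v ∈ L} := by
  ext w
  simp only [DownInterior, Set.mem_setOf_eq]
  constructor
  · rintro ⟨U, hUL, hUc, hwU⟩ v hv
    have hvU : v ∈ DownClosure U := ⟨w, hwU, hv⟩
    exact hUL v (hUc ▸ hvU)
  · intro h
    refine ⟨{u | ∀ v, v <+ u → v ∈ L}, fun x hx => hx x (List.Sublist.refl x), ?_, h⟩
    ext u
    simp only [DownClosure, Set.mem_setOf_eq]
    constructor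
    · rintro ⟨x, hx, hux⟩ v hvu
      exact hx v (hvu.trans hux)
    · intro hu
      exact ⟨u, hu, List.Sublist.refl u⟩

lemma mem_upInterior {L : Language α} (hc : IsCommutativeLang L) (w : List α) :
    w ∈ UpInterior L ↔ ∀ v, w <+~ v → v ∈ L := by
  rw [upInterior_char]
  constructor
  · intro h v hv
    obtain ⟨l, hl, hwl⟩ := List.subperm_iff.mp hv
    exact (hc l v hl).mp (h l hwl)
  · intro h v hv
    exact h v hv.subperm

lemma mem_downInterior {L : Language α} (hc : IsCommutativeLang L) (w : List α) :
    w ∈ DownInterior L ↔ ∀ v, v <+~ w → v ∈ L := by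
  rw [downInterior_char]
  constructor
  · intro h v hv
    obtain ⟨l, hl, hlw⟩ := hv
    exact (hc l v hl).mp (h l hlw)
  · intro h v hv
    exact h v hv.subperm

variable [DecidableEq α]

def wordOn : List α → (α → ℕ) → List α
  | [], _ => []
  | a :: tl, c => List.replicate (c a) a ++ wordOn tl c

lemma count_wordOn {ls : List α} (hnd : ls.Nodup) (c : α → ℕ) (b : α) :
    (wordOn ls c).count b = if b ∈ ls then c b else 0 := by
  induction ls with
  | nil => simp [wordOn]
  | cons a tl ih =>
    rcases List.nodup_cons.mp hnd with ⟨ha, htl⟩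
    rw [wordOn, List.count_append, List.count_replicate, ih htl]
    by_cases hba : b = a
    · subst hba
      simp [ha]
    · simp [hba, Ne.symm hba, List.mem_cons]

lemma mem_upInterior_count {L : Language α} (hc : IsCommutativeLang L)
    {ls : List α} (hnd : ls.Nodup) (hcov : ∀ a, a ∈ ls) (w : List α) :
    w ∈ UpInterior L ↔ ∀ d : α → ℕ, (∀ a, w.count a ≤ d a) → wordOn ls d ∈ L := by
  rw [mem_upInterior hc]
  constructor
  · intro h d hd
    refine h _ (List.subperm_ext_iff.mpr fun a _ => ?_)
    rw [count_wordOn hnd, if_pos (hcov a)]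
    exact hd a
  · intro h v hv
    have h1 := h (fun a => v.count a) (fun a => hv.count_le a)
    have hp : wordOn ls (fun a => v.count a) ~ v := by
      rw [List.perm_iff_count]
      intro b
      rw [count_wordOn hnd, if_pos (hcov b)]
    exact (hc _ v hp).mp h1

lemma mem_downInterior_count {L : Language α} (hc : IsCommutativeLang L)
    {ls : List α} (hnd : ls.Nodup) (hcov : ∀ a, a ∈ ls) (w : List α) :
    w ∈ DownInterior L ↔ ∀ d : α → ℕ, (∀ a, d a ≤ w.count a) → wordOn ls d ∈ L := by
  rw [mem_downInterior hc]
  constructor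
  · intro h d hd
    refine h _ (List.subperm_ext_iff.mpr fun a _ => ?_)
    rw [count_wordOn hnd, if_pos (hcov a)]
    exact hd a
  · intro h v hv
    have h1 := h (fun a => v.count a) (fun a => hv.count_le a)
    have hp : wordOn ls (fun a => v.count a) ~ v := by
      rw [List.perm_iff_count]
      intro b
      rw [count_wordOn hnd, if_pos (hcov b)]
    exact (hc _ v hp).mp h1


lemma exists_period {σ : Type} [Fintype σ] {n : ℕ} (hn : Fintype.card σ = n)
    (f : ℕ → σ) (hf : ∀ i j, f i = f j → f (i + 1) = f (j + 1)) :
    ∃ i p, i < n ∧ 1 ≤ p ∧ i + p ≤ n ∧ ∀ m, i ≤ m → f (m + p) = f m := by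
  obtain ⟨x, y, hxy, hfxy⟩ :=
    Fintype.exists_ne_map_eq_of_card_lt (fun t : Fin (n + 1) => f t) (by simp [hn])
  have key : ∀ (i j : ℕ), i < j → j ≤ n → f i = f j →
      ∃ i' p, i' < n ∧ 1 ≤ p ∧ i' + p ≤ n ∧ ∀ m, i' ≤ m → f (m + p) = f m := by
    intro i j hij hjn hfij
    refine ⟨i, j - i, by omega, by omega, by omega, ?_⟩
    have step : ∀ t, f (i + t + (j - i)) = f (i + t) := by
      intro t
      induction t with
      | zero =>
        rw [show i + 0 + (j - i) = j by omega, show i + 0 = i by omega]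
        exact hfij.symm
      | succ t ih =>
        have h2 := hf _ _ ih
        rw [show i + (t + 1) + (j - i) = i + t + (j - i) + 1 by omega,
          show i + (t + 1) = i + t + 1 by omega]
        exact h2
    intro m him
    have h3 := step (m - i)
    rw [show i + (m - i) = m by omega] at h3
    exact h3
  have hx : (x : ℕ) ≠ (y : ℕ) := fun h => hxy (Fin.ext h)
  rcases Nat.lt_or_ge (x : ℕ) (y : ℕ) with hlt | hge
  · exact key x y hlt (by omega) hfxy
  · exact key y x (by omega) (by omega) hfxy.symm

lemma g_all {σ : Type} [Fintype σ] {n : ℕ} (hn : Fintype.card σ = n)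
    (f : ℕ → σ) (hf : ∀ i j, f i = f j → f (i + 1) = f (j + 1))
    (g : ℕ → Prop) (hg : ∀ i j, f i = f j → g i → g j)
    (h : ∀ j, j < n → g j) : ∀ j, g j := by
  obtain ⟨i, p, hin, hp, hipn, hper⟩ := exists_period hn f hf
  intro j
  induction j using Nat.strong_induction_on with
  | _ j ih =>
    by_cases hj : j < n
    · exact h j hj
    · push_neg at hj
      have h2 := hper (j - p) (by omega)
      rw [show j - p + p = j by omega] at h2
      exact hg _ _ h2.symm (ih (j - p) (by omega))

lemma g_tail {σ : Type} [Fintype σ] {n : ℕ} (hn : Fintype.card σ = n)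
    (f : ℕ → σ) (hf : ∀ i j, f i = f j → f (i + 1) = f (j + 1))
    (g : ℕ → Prop) (hg : ∀ i j, f i = f j → g i → g j)
    (N : ℕ) (h : ∀ j, N ≤ j → g j) : ∀ j, n - 1 ≤ j → g j := by
  obtain ⟨i, p, hin, hp, hipn, hper⟩ := exists_period hn f hf
  intro j hj
  have hrep : ∀ t, f (j + p * t) = f j := by
    intro t
    induction t with
    | zero => simp
    | succ t ih =>
      have h2 := hper (j + p * t) (by omega)
      rw [show j + p * (t + 1) = j + p * t + p by ring]
      exact h2.trans ih
  have hpN : N ≤ p * N := Nat.le_mul_of_pos_left N hp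
  exact hg _ _ (hrep N) (h _ (by omega))


def UpD (L : Language α) (ls : List α) (c : α → ℕ) : Prop :=
  ∀ d : α → ℕ, (∀ b, c b ≤ d b) → wordOn ls d ∈ L

def DownD (L : Language α) (ls : List α) (c : α → ℕ) : Prop :=
  ∀ d : α → ℕ, (∀ b, d b ≤ c b) → wordOn ls d ∈ L

lemma upD_mono {L : Language α} {ls : List α} {c c' : α → ℕ}
    (h : ∀ b, c b ≤ c' b) (hU : UpD L ls c) : UpD L ls c' :=
  fun d hd => hU d fun b => le_trans (h b) (hd b)

lemma downD_anti {L : Language α} {ls : List α} {c c' : α → ℕ}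
    (h : ∀ b, c b ≤ c' b) (hD : DownD L ls c') : DownD L ls c :=
  fun d hd => hD d fun b => le_trans (hd b) (h b)

section Machine

variable {σ : Type} [Fintype σ] {n : ℕ} {M : DFA α σ} {L : Language α} {ls : List α}

lemma g_setup (hc : IsCommutativeLang L) (hL : M.accepts = L)
    (hnd : ls.Nodup) (hcov : ∀ a, a ∈ ls) (d : α → ℕ) (a : α) :
    ∃ f : ℕ → σ, (∀ i j, f i = f j → f (i + 1) = f (j + 1)) ∧
      (∀ i j, f i = f j →
        wordOn ls (Function.update d a i) ∈ L → wordOn ls (Function.update d a j) ∈ L) := by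
  set w0 : List α := wordOn ls (Function.update d a 0) with hw0
  refine ⟨fun x => M.evalFrom M.start (w0 ++ List.replicate x a), ?_, ?_⟩
  · intro i j hij
    have e : ∀ x : ℕ, M.evalFrom M.start (w0 ++ List.replicate (x + 1) a)
        = M.evalFrom (M.evalFrom M.start (w0 ++ List.replicate x a)) [a] := by
      intro x
      rw [List.replicate_succ', ← List.append_assoc, DFA.evalFrom_of_append]
    simp only [] at hij ⊢
    rw [e i, e j, hij]
  · have hperm : ∀ x : ℕ,
        wordOn ls (Function.update d a x) ~ w0 ++ List.replicate x a := by
      intro x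
      rw [List.perm_iff_count]
      intro b
      rw [List.count_append, count_wordOn hnd, count_wordOn hnd,
        if_pos (hcov b), if_pos (hcov b), List.count_replicate]
      by_cases hba : b = a
      · subst hba
        simp [Function.update_apply]
      · simp [Function.update_apply, hba, Ne.symm hba]
    have hmem : ∀ x : ℕ, wordOn ls (Function.update d a x) ∈ L ↔
        M.evalFrom M.start (w0 ++ List.replicate x a) ∈ M.accept := by
      intro x
      rw [hc _ _ (hperm x), ← hL, DFA.mem_accepts]
      rfl
    intro i j hij hi
    rw [hmem] at hi ⊢
    simp only [] at hij
    rwa [hij] at hi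

lemma upD_cap (hn : Fintype.card σ = n) (hc : IsCommutativeLang L) (hL : M.accepts = L)
    (hnd : ls.Nodup) (hcov : ∀ a, a ∈ ls) (c : α → ℕ) (a : α) (hca : n - 1 ≤ c a)
    (h : UpD L ls c) : UpD L ls (Function.update c a (n - 1)) := by
  intro d hd
  obtain ⟨f, hf, hg⟩ := g_setup hc hL hnd hcov d a
  have hN : ∀ x, c a ≤ x → wordOn ls (Function.update d a x) ∈ L := by
    intro x hx
    apply h (Function.update d a x)
    intro b
    by_cases hba : b = a
    · subst hba
      simpa [Function.update_apply] using hx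
    · have hdb := hd b
      simp only [Function.update_apply, if_neg hba] at hdb ⊢
      exact hdb
  have hda : n - 1 ≤ d a := by
    have hdb := hd a
    simpa [Function.update_apply] using hdb
  have hfin := g_tail hn f hf (fun x => wordOn ls (Function.update d a x) ∈ L) hg
    (c a) hN (d a) hda
  simp only [Function.update_eq_self] at hfin
  exact hfin

lemma downD_cap (hn : Fintype.card σ = n) (hc : IsCommutativeLang L) (hL : M.accepts = L)
    (hnd : ls.Nodup) (hcov : ∀ a, a ∈ ls) (c : α → ℕ) (a : α)
    (h : DownD L ls (Function.update c a (n - 1))) : DownD L ls c := by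
  intro d hd
  obtain ⟨f, hf, hg⟩ := g_setup hc hL hnd hcov d a
  have hsmall : ∀ x, x < n → wordOn ls (Function.update d a x) ∈ L := by
    intro x hx
    apply h (Function.update d a x)
    intro b
    by_cases hba : b = a
    · subst hba
      simp only [Function.update_self]
      omega
    · have hdb := hd b
      simp only [Function.update_apply, if_neg hba]
      exact hdb
  have hfin := g_all hn f hf (fun x => wordOn ls (Function.update d a x) ∈ L) hg
    hsmall (d a)
  simp only [Function.update_eq_self] at hfin
  exact hfin

lemma upD_capList (hn : Fintype.card σ = n) (hc : IsCommutativeLang L) (hL : M.accepts = L)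
    (hnd : ls.Nodup) (hcov : ∀ a, a ∈ ls) (ms : List α) (c : α → ℕ) :
    UpD L ls c ↔ UpD L ls (fun b => if b ∈ ms then min (c b) (n - 1) else c b) := by
  induction ms with
  | nil =>
    have e : (fun b => if b ∈ ([] : List α) then min (c b) (n - 1) else c b) = c := by
      funext b; simp
    rw [e]
  | cons a ms ih =>
    rw [ih]
    set c1 : α → ℕ := fun b => if b ∈ ms then min (c b) (n - 1) else c b with hc1
    by_cases ha : a ∈ ms
    · have e : (fun b => if b ∈ a :: ms then min (c b) (n - 1) else c b) = c1 := by
        funext b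
        by_cases hb : b ∈ ms
        · simp [hc1, hb, List.mem_cons]
        · have hba : b ≠ a := fun hh => hb (hh ▸ ha)
          simp [hc1, hb, hba, List.mem_cons]
      rw [e]
    · have e : (fun b => if b ∈ a :: ms then min (c b) (n - 1) else c b)
          = Function.update c1 a (min (c a) (n - 1)) := by
        funext b
        by_cases hba : b = a
        · subst hba
          simp [hc1, Function.update_apply, List.mem_cons]
        · simp [hc1, Function.update_apply, hba, List.mem_cons]
      rw [e]
      by_cases hca : c a ≤ n - 1
      · have e2 : Function.update c1 a (min (c a) (n - 1)) = c1 := by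
          have : min (c a) (n - 1) = c1 a := by simp [hc1, ha]; omega
          rw [this, Function.update_eq_self]
        rw [e2]
      · have hca' : n - 1 ≤ c1 a := by simp [hc1, ha]; omega
        have hmin : min (c a) (n - 1) = n - 1 := by omega
        rw [hmin]
        constructor
        · exact fun h => upD_cap hn hc hL hnd hcov c1 a hca' h
        · apply upD_mono
          intro b
          by_cases hba : b = a
          · subst hba
            simp only [Function.update_self]
            omega
          · simp [Function.update_apply, hba]

lemma downD_capList (hn : Fintype.card σ = n) (hc : IsCommutativeLang L) (hL : M.accepts = L)
    (hnd : ls.Nodup) (hcov : ∀ a, a ∈ ls) (ms : List α) (c : α → ℕ) :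
    DownD L ls c ↔ DownD L ls (fun b => if b ∈ ms then min (c b) (n - 1) else c b) := by
  induction ms with
  | nil =>
    have e : (fun b => if b ∈ ([] : List α) then min (c b) (n - 1) else c b) = c := by
      funext b; simp
    rw [e]
  | cons a ms ih =>
    rw [ih]
    set c1 : α → ℕ := fun b => if b ∈ ms then min (c b) (n - 1) else c b with hc1
    by_cases ha : a ∈ ms
    · have e : (fun b => if b ∈ a :: ms then min (c b) (n - 1) else c b) = c1 := by
        funext b
        by_cases hb : b ∈ ms
        · simp [hc1, hb, List.mem_cons]
        · have hba : b ≠ a := fun hh => hb (hh ▸ ha)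
          simp [hc1, hb, hba, List.mem_cons]
      rw [e]
    · have e : (fun b => if b ∈ a :: ms then min (c b) (n - 1) else c b)
          = Function.update c1 a (min (c a) (n - 1)) := by
        funext b
        by_cases hba : b = a
        · subst hba
          simp [hc1, Function.update_apply, List.mem_cons]
        · simp [hc1, Function.update_apply, hba, List.mem_cons]
      rw [e]
      by_cases hca : c a ≤ n - 1
      · have e2 : Function.update c1 a (min (c a) (n - 1)) = c1 := by
          have : min (c a) (n - 1) = c1 a := by simp [hc1, ha]; omega
          rw [this, Function.update_eq_self]
        rw [e2]
      · have hca' : n - 1 ≤ c1 a := by simp [hc1, ha]; omega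
        have hmin : min (c a) (n - 1) = n - 1 := by omega
        rw [hmin]
        constructor
        · apply downD_anti
          intro b
          by_cases hba : b = a
          · subst hba
            simp only [Function.update_self]
            omega
          · simp [Function.update_apply, hba]
        · exact fun h => downD_cap hn hc hL hnd hcov c1 a h

lemma upD_congr (hn : Fintype.card σ = n) (hc : IsCommutativeLang L) (hL : M.accepts = L)
    (hnd : ls.Nodup) (hcov : ∀ a, a ∈ ls) (c c' : α → ℕ)
    (hcc : ∀ b, min (c b) (n - 1) = min (c' b) (n - 1)) (h : UpD L ls c) : UpD L ls c' := by
  have h1 := upD_capList hn hc hL hnd hcov ls c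
  have h2 := upD_capList hn hc hL hnd hcov ls c'
  have e1 : (fun b => if b ∈ ls then min (c b) (n - 1) else c b)
      = fun b => min (c' b) (n - 1) := by
    funext b; rw [if_pos (hcov b), hcc b]
  have e2 : (fun b => if b ∈ ls then min (c' b) (n - 1) else c' b)
      = fun b => min (c' b) (n - 1) := by
    funext b; rw [if_pos (hcov b)]
  rw [e1] at h1
  rw [e2] at h2
  exact h2.mpr (h1.mp h)

lemma downD_congr (hn : Fintype.card σ = n) (hc : IsCommutativeLang L) (hL : M.accepts = L)
    (hnd : ls.Nodup) (hcov : ∀ a, a ∈ ls) (c c' : α → ℕ)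
    (hcc : ∀ b, min (c b) (n - 1) = min (c' b) (n - 1)) (h : DownD L ls c) : DownD L ls c' := by
  have h1 := downD_capList hn hc hL hnd hcov ls c
  have h2 := downD_capList hn hc hL hnd hcov ls c'
  have e1 : (fun b => if b ∈ ls then min (c b) (n - 1) else c b)
      = fun b => min (c' b) (n - 1) := by
    funext b; rw [if_pos (hcov b), hcc b]
  have e2 : (fun b => if b ∈ ls then min (c' b) (n - 1) else c' b)
      = fun b => min (c' b) (n - 1) := by
    funext b; rw [if_pos (hcov b)]
  rw [e1] at h1
  rw [e2] at h2
  exact h2.mpr (h1.mp h)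

end Machine

lemma build {n : ℕ} (hn1 : 0 < n) (I : Language α) (Q : (α → ℕ) → Prop)
    (hQI : ∀ w : List α, w ∈ I ↔ Q (fun a => w.count a))
    (hQinv : ∀ c c' : α → ℕ, (∀ b, min (c b) (n - 1) = min (c' b) (n - 1)) → Q c → Q c') :
    ∃ M' : DFA α (α → Fin n), M'.accepts = I := by
  refine ⟨{ step := fun f a => fun b => if b = a then
              ⟨min ((f b : ℕ) + 1) (n - 1), by omega⟩ else f b
            start := fun _ => ⟨0, hn1⟩
            accept := {f | ∀ c : α → ℕ, (∀ b, min (c b) (n - 1) = (f b : ℕ)) → Q c} }, ?_⟩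
  set M' : DFA α (α → Fin n) :=
    { step := fun f a => fun b => if b = a then
        ⟨min ((f b : ℕ) + 1) (n - 1), by omega⟩ else f b
      start := fun _ => ⟨0, hn1⟩
      accept := {f | ∀ c : α → ℕ, (∀ b, min (c b) (n - 1) = (f b : ℕ)) → Q c} } with hM'
  have heval : ∀ (w : List α) (f : α → Fin n) (gg : α → ℕ),
      (∀ b, (f b : ℕ) = min (gg b) (n - 1)) →
      ∀ b, ((M'.evalFrom f w) b : ℕ) = min (gg b + w.count b) (n - 1) := by
    intro w
    induction w with
    | nil =>
      intro f gg hf b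
      simpa [DFA.evalFrom] using hf b
    | cons x w ih =>
      intro f gg hf b
      have hstep : ∀ b, ((M'.step f x) b : ℕ)
          = min ((if b = x then gg b + 1 else gg b)) (n - 1) := by
        intro b
        by_cases hbx : b = x
        · subst hbx
          have e1 : ((M'.step f b) b : ℕ) = min ((f b : ℕ) + 1) (n - 1) := by
            simp [hM']
          rw [e1, hf b, if_pos rfl]
          omega
        · have e1 : (M'.step f x) b = f b := by
            simp [hM', hbx]
          rw [e1, hf b, if_neg hbx]
      have h2 := ih (M'.step f x) (fun b => if b = x then gg b + 1 else gg b) hstep b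
      have e : M'.evalFrom f (x :: w) = M'.evalFrom (M'.step f x) w := rfl
      rw [e, h2, List.count_cons]
      by_cases hbx : b = x
      · subst hbx
        simp
        omega
      · simp [hbx, Ne.symm hbx]
  ext w
  rw [DFA.mem_accepts]
  have hw : ∀ b, ((M'.eval w) b : ℕ) = min (w.count b) (n - 1) := by
    intro b
    have h3 := heval w M'.start (fun _ => 0) (by intro b; simp [hM']) b
    simp at h3
    exact h3
  constructor
  · intro h
    rw [hQI]
    exact h (fun a => w.count a) (fun b => (hw b).symm)
  · intro h c hcc
    exact hQinv (fun a => w.count a) c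
      (fun b => (hw b).symm.trans (hcc b).symm) ((hQI w).mp h)

end IntAux

/-- the upward and downward interiors of a commutative language
recognized by a DFA with `n` states are recognized by DFAs with at most `n ^ k`
states, `k` the alphabet size. -/
theorem interiors_state_bound {α : Type} [Fintype α] (k n : ℕ)
    (hk : Fintype.card α = k) (L : Language α) (hcomm : IsCommutativeLang L)
    (hrec : ∃ (σ : Type) (_ : Fintype σ) (M : DFA α σ),
      Fintype.card σ = n ∧ M.accepts = L) :
    (∃ (τ : Type) (_ : Fintype τ) (M' : DFA α τ),
      Fintype.card τ ≤ n ^ k ∧ M'.accepts = UpInterior L) ∧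
    (∃ (τ : Type) (_ : Fintype τ) (M' : DFA α τ),
      Fintype.card τ ≤ n ^ k ∧ M'.accepts = DownInterior L) := by
  classical
  obtain ⟨σ, instσ, M, hσ, hL⟩ := hrec
  have hn1 : 0 < n := hσ ▸ Fintype.card_pos_iff.mpr ⟨M.start⟩
  set ls : List α := (Finset.univ : Finset α).toList with hls
  have hnd : ls.Nodup := Finset.nodup_toList _
  have hcov : ∀ a : α, a ∈ ls := fun a => by simp [hls]
  have hcard : Fintype.card (α → Fin n) = n ^ k := by
    rw [Fintype.card_fun, Fintype.card_fin, hk]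
  constructor
  · obtain ⟨M', hM'⟩ := IntAux.build hn1 (UpInterior L)
      (fun c => IntAux.UpD L ls c)
      (fun w => IntAux.mem_upInterior_count hcomm hnd hcov w)
      (fun c c' hcc => IntAux.upD_congr hσ hcomm hL hnd hcov c c' hcc)
    exact ⟨α → Fin n, inferInstance, M', le_of_eq hcard, hM'⟩
  · obtain ⟨M', hM'⟩ := IntAux.build hn1 (DownInterior L)
      (fun c => IntAux.DownD L ls c)
      (fun w => IntAux.mem_downInterior_count hcomm hnd hcov w)
      (fun c c' hcc => IntAux.downD_congr hσ hcomm hL hnd hcov c c' hcc)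
    exact ⟨α → Fin n, inferInstance, M', le_of_eq hcard, hM'⟩
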